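/- In the sequential discovery model, swapping adjacent products A (position h) and B (position h+1) with u_A^e < u_B^e weakly decreases the expected total discovery costs paid: E[∑_k 1(max of values discovered up to k < z^d(k))·c_d(k)] is weakly smaller after the swap, given c_d(k) ≥ 0 and the stopping rule based on the running maximum versus the weakly decreasing discovery values. -/

import Mathlib

open MeasureTheory

/-- Value of the product displayed at (0-indexed) position `j` under ranking `r`. -/
noncomputable def posVal {Ω : Type*} (n : ℕ) (u : Fin n → ℝ) (M : Fin n → Ω → ℝ)
    (r : Equiv.Perm (Fin n)) (j : ℕ) (ω : Ω) : ℝ :=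
  if h : j < n then u (r ⟨j, h⟩) + M (r ⟨j, h⟩) ω else 0

/-- Running maximum of the outside option value and the first `h` discovered values. -/
noncomputable def runMax {Ω : Type*} (W0 : Ω → ℝ) (v : ℕ → Ω → ℝ) (h : ℕ) (ω : Ω) : ℝ :=
  (Finset.range (h + 1)).sup' (Finset.nonempty_range_iff.mpr (Nat.succ_ne_zero h))
    (fun j => if j = 0 then W0 ω else v (j - 1) ω)

/-- Total discovery costs paid: the consumer pays `cd k` to discover position `k+1`
iff the running maximum of values discovered up to position `k` is below `zd k`. -/
noncomputable def discCost {Ω : Type*} (n : ℕ) (zd cd : ℕ → ℝ) (W0 : Ω → ℝ)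
    (v : ℕ → Ω → ℝ) (ω : Ω) : ℝ :=
  ∑ k ∈ Finset.range n, if runMax W0 v k ω < zd k then cd k else 0

section Aux

variable {Ω : Type*} [MeasurableSpace Ω]

lemma measurable_posVal (n : ℕ) (u : Fin n → ℝ) (M : Fin n → Ω → ℝ)
    (hM : ∀ i, Measurable (M i)) (r : Equiv.Perm (Fin n)) (j : ℕ) :
    Measurable (posVal n u M r j) := by
  unfold posVal
  split_ifs with h
  · exact measurable_const.add (hM _)
  · exact measurable_const

lemma measurable_runMax (W0 : Ω → ℝ) (hW0 : Measurable W0) (v : ℕ → Ω → ℝ)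
    (hv : ∀ j, Measurable (v j)) (k : ℕ) : Measurable (runMax W0 v k) := by
  have heq : runMax W0 v k = (Finset.range (k + 1)).sup'
      (Finset.nonempty_range_iff.mpr (Nat.succ_ne_zero k))
      (fun j ω => if j = 0 then W0 ω else v (j - 1) ω) := by
    funext ω
    rw [Finset.sup'_apply]
    rfl
  rw [heq]
  exact Finset.measurable_sup' _
    (fun j _ => by
      rcases eq_or_ne j 0 with h | h
      · simpa [h] using hW0
      · simpa [h] using hv (j - 1))

lemma runMax_succ (W0 : Ω → ℝ) (v : ℕ → Ω → ℝ) (k : ℕ) (ω : Ω) :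
    runMax W0 v (k + 1) ω = max (runMax W0 v k ω) (v k ω) := by
  unfold runMax
  rw [Finset.sup'_congr _ (Finset.range_add_one (n := k + 1)) (fun j _ => rfl),
    Finset.sup'_insert]
  simp only [Nat.succ_ne_zero, if_false, Nat.add_sub_cancel]
  exact max_comm _ _

lemma integral_ite_lt (μ : Measure Ω) [IsFiniteMeasure μ] (X : Ω → ℝ) (hX : Measurable X)
    (t c : ℝ) :
    ∫ ω, (if X ω < t then c else 0) ∂μ = (μ {ω | X ω < t}).toReal * c := by
  have hs : MeasurableSet {ω | X ω < t} := measurableSet_lt hX measurable_const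
  have heq : (fun ω => if X ω < t then c else 0)
      = Set.indicator {ω | X ω < t} (fun _ => c) := by
    funext ω; simp [Set.indicator_apply, Set.mem_setOf_eq]
  rw [heq, integral_indicator_const _ hs, smul_eq_mul]
  rfl

lemma integrable_ite_lt (μ : Measure Ω) [IsFiniteMeasure μ] (X : Ω → ℝ) (hX : Measurable X)
    (t c : ℝ) : Integrable (fun ω => if X ω < t then c else 0) μ := by
  have hs : MeasurableSet {ω | X ω < t} := measurableSet_lt hX measurable_const
  have heq : (fun ω => if X ω < t then c else 0)
      = Set.indicator {ω | X ω < t} (fun _ => c) := by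
    funext ω; simp [Set.indicator_apply, Set.mem_setOf_eq]
  rw [heq]
  exact (integrable_const c).indicator hs

/-- Independence of the running max of the first `m` discovered values from `M i`,
when `i` is not among the first `m` displayed products. -/
lemma indep_runMax (μ : Measure Ω) (n : ℕ) (u : Fin n → ℝ) (M : Fin n → Ω → ℝ)
    (W0 : Ω → ℝ) (hW0 : Measurable W0) (hM : ∀ i, Measurable (M i))
    (hindep : ProbabilityTheory.iIndepFun
      (Fin.cons W0 M : Fin (n + 1) → Ω → ℝ) μ)
    (r : Equiv.Perm (Fin n)) (m : ℕ) (hm : m ≤ n) (i : Fin n)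
    (hi : ∀ (j : Fin n), (j : ℕ) < m → r j ≠ i) :
    ProbabilityTheory.IndepFun (runMax W0 (posVal n u M r) m) (M i) μ := by
  classical
  set F : Fin (n + 1) → Ω → ℝ := Fin.cons W0 M with hF
  have hmeasF : ∀ k, Measurable (F k) := by
    intro k
    induction k using Fin.cases with
    | zero => simpa [hF] using hW0
    | succ j => simpa [hF] using hM j
  set S : Finset (Fin (n + 1)) :=
    insert 0 ((Finset.univ.filter (fun j : Fin n => (j : ℕ) < m)).image
      (fun j => (r j).succ)) with hS
  set T : Finset (Fin (n + 1)) := {i.succ} with hT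
  have hST : Disjoint S T := by
    rw [Finset.disjoint_singleton_right, hS]
    simp only [Finset.mem_insert, Finset.mem_image, Finset.mem_filter, Finset.mem_univ,
      true_and, not_or, not_exists]
    refine ⟨(Fin.succ_ne_zero i).elim ∘ id, ?_⟩
    · rintro j ⟨hjm, hje⟩
      exact hi j hjm (Fin.succ_injective _ hje)
  have h0S : (0 : Fin (n + 1)) ∈ S := Finset.mem_insert_self _ _
  have hjS : ∀ (j : Fin n), (j : ℕ) < m → (r j).succ ∈ S := by
    intro j hj
    exact Finset.mem_insert_of_mem (Finset.mem_image_of_mem _ (by simp [hj]))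
  set g : ℕ → (S → ℝ) → ℝ := fun j x =>
    if hj : j - 1 < n ∧ 0 < j ∧ j - 1 < m then
        u (r ⟨j - 1, hj.1⟩) + x ⟨(r ⟨j - 1, hj.1⟩).succ, hjS _ hj.2.2⟩
      else if j = 0 then x ⟨0, h0S⟩ else 0 with hg
  have hgmeas : ∀ j, Measurable (g j) := by
    intro j
    rw [hg]
    dsimp only
    by_cases h1 : j - 1 < n ∧ 0 < j ∧ j - 1 < m
    · simp only [dif_pos h1]
      exact (measurable_pi_apply _).const_add _
    · simp only [dif_neg h1]
      split_ifs
      · exact measurable_pi_apply _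
      · exact measurable_const
  set Φ : (S → ℝ) → ℝ := fun x =>
    (Finset.range (m + 1)).sup' (Finset.nonempty_range_iff.mpr (Nat.succ_ne_zero m))
      (fun j => g j x) with hΦ
  have hΦmeas : Measurable Φ := by
    have heq : Φ = (Finset.range (m + 1)).sup'
        (Finset.nonempty_range_iff.mpr (Nat.succ_ne_zero m)) g := by
      funext x
      rw [hΦ, Finset.sup'_apply]
    rw [heq]
    exact Finset.measurable_sup' _ (fun j _ => hgmeas j)
  set Ψ : (T → ℝ) → ℝ := fun x => x ⟨i.succ, Finset.mem_singleton_self _⟩ with hΨ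
  have hΨmeas : Measurable Ψ := measurable_pi_apply _
  have base := hindep.indepFun_finset S T hST hmeasF
  have key := base.comp hΦmeas hΨmeas
  have e1 : (Φ ∘ fun ω (x : S) => F x ω) = runMax W0 (posVal n u M r) m := by
    funext ω
    simp only [Function.comp_apply, hΦ, hg, runMax]
    apply Finset.sup'_congr _ rfl
    intro j hj
    rw [Finset.mem_range] at hj
    by_cases h0 : j = 0
    · subst h0
      rw [dif_neg (by omega : ¬((0:ℕ) - 1 < n ∧ 0 < 0 ∧ (0:ℕ) - 1 < m)), if_pos rfl,
        if_pos rfl]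
      simp [hF]
    · have hcond : j - 1 < n ∧ 0 < j ∧ j - 1 < m := by omega
      rw [dif_pos hcond, if_neg h0]
      simp only [hF, Fin.cons_succ, posVal, dif_pos hcond.1]
  have e2 : (Ψ ∘ fun ω (x : T) => F x ω) = M i := by
    funext ω
    simp only [Function.comp_apply, hΨ, hF, Fin.cons_succ]
  rw [e1, e2] at key
  exact key

end Aux

/-- Swapping adjacent products `A` (position `a`) and `B` (position `a+1`)
with `u_A < u_B` weakly decreases the expected total discovery costs paid, given
`cd k ≥ 0` and the stopping rule based on the running maximum versus the weakly
decreasing discovery values. -/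
theorem adjacent_swap_decreases_expected_discovery_costs
    {Ω : Type*} [MeasurableSpace Ω] (μ : Measure Ω) [IsProbabilityMeasure μ]
    (n : ℕ) (u : Fin n → ℝ) (M : Fin n → Ω → ℝ) (W0 : Ω → ℝ)
    (hW0 : Measurable W0) (hM : ∀ i, Measurable (M i))
    (hindep : ProbabilityTheory.iIndepFun
      (Fin.cons W0 M : Fin (n + 1) → Ω → ℝ) μ)
    (hid : ∀ i j : Fin n, μ.map (M i) = μ.map (M j))
    (hcont : ∀ (i : Fin n) (t : ℝ), μ {ω | M i ω = t} = 0)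
    (zd : ℕ → ℝ) (hzd : Antitone zd)
    (cd : ℕ → ℝ) (hcd : ∀ k, 0 ≤ cd k)
    (r : Equiv.Perm (Fin n)) (a b : Fin n) (hab : (a : ℕ) + 1 = (b : ℕ))
    (hu : u (r a) < u (r b)) :
    ∫ ω, discCost n zd cd W0 (posVal n u M ((Equiv.swap a b).trans r)) ω ∂μ ≤
      ∫ ω, discCost n zd cd W0 (posVal n u M r) ω ∂μ := by
  classical
  set v : ℕ → Ω → ℝ := posVal n u M r with hv_def
  set v' : ℕ → Ω → ℝ := posVal n u M ((Equiv.swap a b).trans r) with hv'_def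
  have han : (a : ℕ) < n := a.isLt
  have hbn : (b : ℕ) < n := b.isLt
  have hvmeas : ∀ j, Measurable (v j) := measurable_posVal n u M hM r
  have hv'meas : ∀ j, Measurable (v' j) := measurable_posVal n u M hM _
  -- pointwise values
  have hva : ∀ ω, v (a : ℕ) ω = u (r a) + M (r a) ω := by
    intro ω; simp only [hv_def, posVal, dif_pos han, Fin.eta]
  have hvb : ∀ ω, v (b : ℕ) ω = u (r b) + M (r b) ω := by
    intro ω; simp only [hv_def, posVal, dif_pos hbn, Fin.eta]
  have hswap_a : ∀ ω, v' (a : ℕ) ω = v (b : ℕ) ω := by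
    intro ω
    simp only [hv'_def, hv_def, posVal, dif_pos han, dif_pos hbn, Equiv.trans_apply,
      Fin.eta, Equiv.swap_apply_left]
  have hswap_b : ∀ ω, v' (b : ℕ) ω = v (a : ℕ) ω := by
    intro ω
    simp only [hv'_def, hv_def, posVal, dif_pos han, dif_pos hbn, Equiv.trans_apply,
      Fin.eta, Equiv.swap_apply_right]
  have hfix : ∀ j, j ≠ (a : ℕ) → j ≠ (b : ℕ) → ∀ ω, v' j ω = v j ω := by
    intro j hja hjb ω
    simp only [hv'_def, hv_def, posVal]
    by_cases hjn : j < n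
    · rw [dif_pos hjn, dif_pos hjn, Equiv.trans_apply,
        Equiv.swap_apply_of_ne_of_ne (Fin.ne_of_val_ne hja) (Fin.ne_of_val_ne hjb)]
    · rw [dif_neg hjn, dif_neg hjn]
  -- running maxima agree except at position b
  have hk_eq : ∀ k, k ≠ (b : ℕ) → ∀ ω, runMax W0 v' k ω = runMax W0 v k ω := by
    intro k hk ω
    set τ : ℕ → ℕ := fun j =>
      if j = (a : ℕ) + 1 then (b : ℕ) + 1 else if j = (b : ℕ) + 1 then (a : ℕ) + 1 else j
      with hτ
    have hττ : ∀ j, τ (τ j) = j := by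
      intro j; simp only [hτ]; split_ifs <;> first | omega | simp_all
    have hτle : ∀ j, j ≤ k → τ j ≤ k := by
      intro j hj; simp only [hτ]; split_ifs <;> first | omega | simp_all
    have hff' : ∀ j, (if j = 0 then W0 ω else v' (j - 1) ω)
        = (if τ j = 0 then W0 ω else v (τ j - 1) ω) := by
      intro j
      by_cases h0 : j = 0
      · subst h0
        have ht0 : τ 0 = 0 := by simp only [hτ]; split_ifs <;> first | omega | simp_all
        rw [ht0, if_pos rfl, if_pos rfl]
      · by_cases hja : j = (a : ℕ) + 1
        · subst hja
          have hτj : τ ((a : ℕ) + 1) = (b : ℕ) + 1 := by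
            simp only [hτ]; split_ifs <;> first | omega | simp_all
          rw [hτj, if_neg h0, if_neg (Nat.succ_ne_zero _)]
          simp only [Nat.add_sub_cancel]
          exact hswap_a ω
        · by_cases hjb : j = (b : ℕ) + 1
          · subst hjb
            have hτj : τ ((b : ℕ) + 1) = (a : ℕ) + 1 := by
              simp only [hτ]; split_ifs <;> first | omega | simp_all
            rw [hτj, if_neg h0, if_neg (Nat.succ_ne_zero _)]
            simp only [Nat.add_sub_cancel]
            exact hswap_b ω
          · have hτj : τ j = j := by simp only [hτ]; split_ifs <;> first | omega | simp_all
            rw [hτj, if_neg h0, if_neg h0]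
            exact hfix (j - 1) (by omega) (by omega) ω
    unfold runMax
    apply le_antisymm
    · apply Finset.sup'_le
      intro j hj
      rw [Finset.mem_range, Nat.lt_succ_iff] at hj
      rw [hff' j]
      exact Finset.le_sup' (fun j => if j = 0 then W0 ω else v (j - 1) ω)
        (Finset.mem_range.mpr (Nat.lt_succ_of_le (hτle j hj)))
    · apply Finset.sup'_le
      intro j hj
      rw [Finset.mem_range, Nat.lt_succ_iff] at hj
      have h := hff' (τ j)
      rw [hττ j] at h
      rw [← h]
      exact Finset.le_sup' (fun j => if j = 0 then W0 ω else v' (j - 1) ω)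
        (Finset.mem_range.mpr (Nat.lt_succ_of_le (hτle j hj)))
  -- expand integrals as sums
  have expand : ∀ (w : ℕ → Ω → ℝ), (∀ j, Measurable (w j)) →
      ∫ ω, discCost n zd cd W0 w ω ∂μ
        = ∑ k ∈ Finset.range n, (μ {ω | runMax W0 w k ω < zd k}).toReal * cd k := by
    intro w hw
    unfold discCost
    rw [integral_finset_sum]
    · exact Finset.sum_congr rfl fun k _ =>
        integral_ite_lt μ _ (measurable_runMax W0 hW0 w hw k) _ _
    · exact fun k _ => integrable_ite_lt μ _ (measurable_runMax W0 hW0 w hw k) _ _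
  rw [expand v hvmeas, expand v' hv'meas]
  apply Finset.sum_le_sum
  intro k _
  by_cases hkb : k = (b : ℕ)
  · -- the interesting position
    subst hkb
    set t : ℝ := zd (b : ℕ) with ht
    have hXmeas : Measurable (runMax W0 v (a : ℕ)) :=
      measurable_runMax W0 hW0 v hvmeas _
    have hAa : ∀ ω, runMax W0 v' (a : ℕ) ω = runMax W0 v (a : ℕ) ω :=
      hk_eq (a : ℕ) (by omega)
    have hset' : {ω | runMax W0 v' (b : ℕ) ω < t}
        = runMax W0 v (a : ℕ) ⁻¹' Set.Iio t ∩ M (r b) ⁻¹' Set.Iio (t - u (r b)) := by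
      ext ω
      simp only [Set.mem_setOf_eq, Set.mem_inter_iff, Set.mem_preimage, Set.mem_Iio]
      rw [← hab, runMax_succ, hAa ω, hswap_a ω, hvb ω, max_lt_iff, ← lt_sub_iff_add_lt']
    have hset : {ω | runMax W0 v (b : ℕ) ω < t}
        = runMax W0 v (a : ℕ) ⁻¹' Set.Iio t ∩ M (r a) ⁻¹' Set.Iio (t - u (r a)) := by
      ext ω
      simp only [Set.mem_setOf_eq, Set.mem_inter_iff, Set.mem_preimage, Set.mem_Iio]
      rw [← hab, runMax_succ, hva ω, max_lt_iff, ← lt_sub_iff_add_lt']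
    have hindep_a : ProbabilityTheory.IndepFun (runMax W0 v (a : ℕ)) (M (r a)) μ := by
      apply indep_runMax μ n u M W0 hW0 hM hindep r (a : ℕ) (le_of_lt han)
      intro j hj hje
      have := r.injective hje
      subst this
      omega
    have hindep_b : ProbabilityTheory.IndepFun (runMax W0 v (a : ℕ)) (M (r b)) μ := by
      apply indep_runMax μ n u M W0 hW0 hM hindep r (a : ℕ) (le_of_lt han)
      intro j hj hje
      have := r.injective hje
      subst this
      omega
    have hmul_a := hindep_a.measure_inter_preimage_eq_mul (Set.Iio t)
      (Set.Iio (t - u (r a))) measurableSet_Iio measurableSet_Iio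
    have hmul_b := hindep_b.measure_inter_preimage_eq_mul (Set.Iio t)
      (Set.Iio (t - u (r b))) measurableSet_Iio measurableSet_Iio
    have hident : μ (M (r b) ⁻¹' Set.Iio (t - u (r b)))
        = μ (M (r a) ⁻¹' Set.Iio (t - u (r b))) := by
      rw [← Measure.map_apply (hM (r b)) measurableSet_Iio,
        ← Measure.map_apply (hM (r a)) measurableSet_Iio, hid (r b) (r a)]
    have hmono : μ (M (r a) ⁻¹' Set.Iio (t - u (r b)))
        ≤ μ (M (r a) ⁻¹' Set.Iio (t - u (r a))) :=
      measure_mono (Set.preimage_mono (Set.Iio_subset_Iio (by linarith)))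
    have hμle : μ {ω | runMax W0 v' (b : ℕ) ω < t} ≤ μ {ω | runMax W0 v (b : ℕ) ω < t} := by
      rw [hset', hset, hmul_a, hmul_b, hident]
      exact mul_le_mul_right hmono _
    exact mul_le_mul_of_nonneg_right
      (ENNReal.toReal_mono (measure_ne_top μ _) hμle) (hcd _)
  · -- positions other than b are unaffected
    have : {ω | runMax W0 v' k ω < zd k} = {ω | runMax W0 v k ω < zd k} := by
      ext ω; simp only [Set.mem_setOf_eq, hk_eq k hkb ω]
    rw [this]
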